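/- For all vectors ω, γ ∈ ℝ³, the 4×4 matrix I₄ − X(ω,γ)/2 is invertible, and the Cayley-type map on SE(3) admits the polynomial expression τ(ω,γ) := (I₄ − X(ω,γ)/2)⁻¹ (I₄ + X(ω,γ)/2) = I₄ + X(ω,γ) + (2/(4+‖ω‖²)) X(ω,γ)² + (1/(4+‖ω‖²)) X(ω,γ)³. -/

import Mathlib

open Matrix

noncomputable section

/-- The embedding of `se(3)` into `4×4` real matrices: `X(ω,γ)` has upper-left `3×3`
block `ω̂`, upper-right column `γ`, and zero last row. -/
def Xse (ω γ : EuclideanSpace ℝ (Fin 3)) : Matrix (Fin 4) (Fin 4) ℝ :=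
  !![0, -ω 2, ω 1, γ 0;
     ω 2, 0, -ω 0, γ 1;
     -ω 1, ω 0, 0, γ 2;
     0, 0, 0, 0]

lemma norm_sq_eq (ω : EuclideanSpace ℝ (Fin 3)) :
    ‖ω‖^2 = ω 0 ^ 2 + ω 1 ^ 2 + ω 2 ^ 2 := by
  rw [EuclideanSpace.norm_eq, Real.sq_sqrt (by positivity)]
  simp [Fin.sum_univ_three, sq_abs]

lemma expand_aux (X : Matrix (Fin 4) (Fin 4) ℝ) (a b s : ℝ) (hX4 : X^4 = (-s) • X^2) :
    (1 - (1/2:ℝ) • X) * (1 + X + a • X^2 + b • X^3)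
      = 1 + (1/2:ℝ) • X + (a - 1/2 + s * b / 2) • X^2 + (b - a/2) • X^3 := by
  have h2 : X * X = X ^ 2 := (sq X).symm
  have h3 : X * X ^ 2 = X ^ 3 := (pow_succ' X 2).symm
  have h4 : X * X ^ 3 = X ^ 4 := (pow_succ' X 3).symm
  simp only [sub_mul, mul_add, mul_one, one_mul, Matrix.smul_mul, Matrix.mul_smul, smul_smul,
    h2, h3, h4, hX4]
  module

lemma Xse_sq (ω γ : EuclideanSpace ℝ (Fin 3)) :
    Xse ω γ ^ 2 =
      !![-(ω 2^2) - ω 1^2, ω 0 * ω 1, ω 0 * ω 2, -(ω 2 * γ 1) + ω 1 * γ 2;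
         ω 0 * ω 1, -(ω 2^2) - ω 0^2, ω 1 * ω 2, ω 2 * γ 0 - ω 0 * γ 2;
         ω 0 * ω 2, ω 1 * ω 2, -(ω 1^2) - ω 0^2, -(ω 1 * γ 0) + ω 0 * γ 1;
         0, 0, 0, 0] := by
  rw [sq]
  ext i j
  fin_cases i <;> fin_cases j <;>
    · simp [Xse, Matrix.mul_apply, Fin.sum_univ_four, Fin.succAbove, Matrix.vecHead, Matrix.vecTail]
      try ring

lemma Xse_pow_four (ω γ : EuclideanSpace ℝ (Fin 3)) :
    Xse ω γ ^ 4 = (-‖ω‖^2) • Xse ω γ ^ 2 := by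
  have h : Xse ω γ ^ 4 = Xse ω γ ^ 2 * Xse ω γ ^ 2 := by rw [← pow_add]
  rw [h, Xse_sq, norm_sq_eq]
  ext i j
  fin_cases i <;> fin_cases j <;>
    · simp [Matrix.mul_apply, Fin.sum_univ_four, Fin.succAbove, Matrix.vecHead, Matrix.vecTail]
      try ring

/-- `I₄ − X(ω,γ)/2` is invertible and the Cayley-type map on `SE(3)` has the polynomial
expression `τ(ω,γ) = I₄ + X + (2/(4+‖ω‖²)) X² + (1/(4+‖ω‖²)) X³`. -/
theorem tau_polynomial_expression (ω γ : EuclideanSpace ℝ (Fin 3)) :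
    IsUnit ((1 : Matrix (Fin 4) (Fin 4) ℝ) - (1/2 : ℝ) • Xse ω γ) ∧
    ((1 : Matrix (Fin 4) (Fin 4) ℝ) - (1/2 : ℝ) • Xse ω γ)⁻¹ *
        ((1 : Matrix (Fin 4) (Fin 4) ℝ) + (1/2 : ℝ) • Xse ω γ)
      = 1 + Xse ω γ + (2 / (4 + ‖ω‖^2)) • Xse ω γ ^ 2
          + (1 / (4 + ‖ω‖^2)) • Xse ω γ ^ 3 := by
  have hn := norm_sq_eq ω
  have hpos : (0:ℝ) < 4 + ‖ω‖^2 := by positivity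
  have hne : (4 + ‖ω‖^2 : ℝ) ≠ 0 := ne_of_gt hpos
  set A : Matrix (Fin 4) (Fin 4) ℝ := 1 - (1/2 : ℝ) • Xse ω γ with hA
  have hAe : A = !![1, ω 2 / 2, -(ω 1 / 2), -(γ 0 / 2);
                    -(ω 2 / 2), 1, ω 0 / 2, -(γ 1 / 2);
                    ω 1 / 2, -(ω 0 / 2), 1, -(γ 2 / 2);
                    0, 0, 0, 1] := by
    ext i j
    fin_cases i <;> fin_cases j <;>
      · simp [hA, Xse, Matrix.one_apply, Fin.succAbove, Matrix.vecHead, Matrix.vecTail]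
        try ring
  have hdet : A.det = (4 + ‖ω‖^2) / 4 := by
    rw [hn, hAe]
    simp [Matrix.det_succ_row_zero, Fin.sum_univ_succ, Fin.succAbove, Matrix.vecHead, Matrix.vecTail]
    ring
  have hdetne : A.det ≠ 0 := by rw [hdet]; positivity
  have hunit : IsUnit A := (Matrix.isUnit_iff_isUnit_det A).mpr (isUnit_iff_ne_zero.mpr hdetne)
  refine ⟨hunit, ?_⟩
  have : Invertible A := A.invertibleOfIsUnitDet (isUnit_iff_ne_zero.mpr hdetne)
  rw [Matrix.inv_mul_eq_iff_eq_mul_of_invertible, hA,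
    expand_aux (Xse ω γ) _ _ (‖ω‖^2) (Xse_pow_four ω γ)]
  have e2 : (2 / (4 + ‖ω‖^2) - 1/2 + ‖ω‖^2 * (1 / (4 + ‖ω‖^2)) / 2 : ℝ) = 0 := by
    field_simp
    ring
  have e3 : (1 / (4 + ‖ω‖^2) - (2 / (4 + ‖ω‖^2))/2 : ℝ) = 0 := by ring
  rw [e2, e3, zero_smul, zero_smul, add_zero, add_zero]
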